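/- Let B be a nonempty subset of (0,1) that is closed in ℝ and θ-invariant (B = θ(B)). Then B has Lebesgue measure zero. -/

import Mathlib

open Set MeasureTheory Filter

open Classical in
/-- The doubling map `θ` on `[0,1)`: `θ(ξ) = 2ξ` for `ξ < 1/2`, `2ξ − 1` otherwise. -/
noncomputable def theta (ξ : ℝ) : ℝ := if ξ < 1/2 then 2*ξ else 2*ξ - 1

open Classical in
/-- `ξ* = ξ + 1/2` for `ξ ∈ [0,1/2]` and `ξ − 1/2` for `ξ ∈ (1/2,1]`. -/
noncomputable def starR (ξ : ℝ) : ℝ := if ξ ≤ 1/2 then ξ + 1/2 else ξ - 1/2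

lemma theta_eq_fract {x : ℝ} (h0 : 0 ≤ x) (h1 : x < 1) :
    theta x = Int.fract (2 * x) := by
  unfold theta
  split_ifs with h
  · exact (Int.fract_eq_self.2 ⟨by linarith, by linarith⟩).symm
  · push_neg at h
    have : Int.fract (2 * x) = Int.fract (2 * x - (1:ℤ)) := (Int.fract_sub_intCast _ _).symm
    rw [this]
    push_cast
    exact (Int.fract_eq_self.2 ⟨by linarith, by linarith⟩).symm

/-- A nonempty, closed, `θ`-invariant `B ⊂ (0,1)` has Lebesgue measure zero. -/
theorem measure_zero_of_theta_invariant (B : Set ℝ) (hne : B.Nonempty)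
    (hB : B ⊆ Set.Ioo 0 1) (hcl : IsClosed B) (hinv : B = theta '' B) :
    volume B = 0 := by
  by_contra hμ
  -- forward invariance
  have hfw : ∀ x ∈ B, theta x ∈ B := by
    intro x hx
    rw [hinv]
    exact ⟨x, hx, rfl⟩
  -- the minimum of B
  have hbdd : BddBelow B := ⟨0, fun x hx => (hB hx).1.le⟩
  set m := sInf B with hm
  have hmB : m ∈ B := hcl.csInf_mem hne hbdd
  have hm0 : 0 < m := (hB hmB).1
  have hm1 : m < 1 := (hB hmB).2
  have hmin : ∀ x ∈ B, m ≤ x := fun x hx => csInf_le hbdd hx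
  -- iterated doubling stays in B
  have hfrac : ∀ n : ℕ, ∀ x ∈ B, Int.fract ((2:ℝ)^n * x) ∈ B := by
    intro n
    induction n with
    | zero =>
      intro x hx
      simpa [Int.fract_eq_self.2 ⟨(hB hx).1.le, (hB hx).2⟩] using hx
    | succ n ih =>
      intro x hx
      have hy := ih x hx
      have h0 : (0:ℝ) ≤ Int.fract ((2:ℝ)^n * x) := Int.fract_nonneg _
      have h1 : Int.fract ((2:ℝ)^n * x) < 1 := Int.fract_lt_one _
      have key : Int.fract ((2:ℝ)^(n+1) * x) = theta (Int.fract ((2:ℝ)^n * x)) := by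
        rw [theta_eq_fract h0 h1]
        have : (2:ℝ)^(n+1) * x = 2 * Int.fract ((2:ℝ)^n * x) + (2 * ⌊(2:ℝ)^n * x⌋ : ℤ) := by
          push_cast
          rw [Int.fract]
          ring
        rw [this, Int.fract_add_intCast]
      rw [key]
      exact hfw _ hy
  -- the gap lemma: B misses the left m-fraction of every dyadic interval
  have hgap : ∀ (n : ℕ) (k : ℤ) (x : ℝ), x ∈ B →
      ¬ ((k:ℝ)/2^n ≤ x ∧ x < ((k:ℝ)+m)/2^n) := by
    rintro n k x hx ⟨h1, h2⟩
    have hp : (0:ℝ) < 2^n := by positivity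
    rw [div_le_iff₀ hp] at h1
    rw [lt_div_iff₀ hp] at h2
    have hfl : ⌊(2:ℝ)^n * x⌋ = k := by
      apply Int.floor_eq_iff.2
      constructor
      · nlinarith
      · push_cast; nlinarith
    have hmem := hmin _ (hfrac n x hx)
    rw [Int.fract, hfl] at hmem
    nlinarith
  -- density point argument
  have hBmeas : MeasurableSet B := hcl.measurableSet
  have hres : volume.restrict B ≠ 0 := by
    simp only [ne_eq, Measure.restrict_eq_zero]
    exact hμ
  have : (ae (volume.restrict B)).NeBot := ae_neBot.2 hres
  have hae := Besicovitch.ae_tendsto_measure_inter_div volume B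
  obtain ⟨x, hxT, hxB⟩ := (hae.and (ae_restrict_mem hBmeas)).exists
  -- key estimate at scale 2⁻ⁿ
  have key : ∀ n : ℕ,
      volume (B ∩ Metric.closedBall x (((2:ℝ)^n)⁻¹)) / volume (Metric.closedBall x (((2:ℝ)^n)⁻¹))
        ≤ ENNReal.ofReal (1 - m/2) := by
    intro n
    have hp : (0:ℝ) < 2^n := by positivity
    set r : ℝ := ((2:ℝ)^n)⁻¹ with hrdef
    have hr0 : 0 < r := by positivity
    have hrp : (2:ℝ)^n * r = 1 := mul_inv_cancel₀ hp.ne'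
    set k : ℤ := ⌊(2:ℝ)^n * x⌋ with hk
    have hfl1 : (k:ℝ) ≤ 2^n * x := Int.floor_le _
    have hfl2 : (2:ℝ)^n * x < k + 1 := Int.lt_floor_add_one _
    set G : Set ℝ := Ico ((k:ℝ)/2^n) (((k:ℝ)+m)/2^n) with hG
    have hGsub : G ⊆ Icc (x - r) (x + r) := by
      intro y hy
      obtain ⟨hy1, hy2⟩ := hy
      rw [div_le_iff₀ hp] at hy1
      rw [lt_div_iff₀ hp] at hy2
      constructor
      · nlinarith
      · nlinarith
    have hBG : B ∩ Metric.closedBall x r ⊆ Icc (x - r) (x + r) \ G := by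
      rw [Real.closedBall_eq_Icc]
      rintro y ⟨hyB, hyI⟩
      refine ⟨hyI, ?_⟩
      intro hyG
      exact hgap n k y hyB ⟨hyG.1, hyG.2⟩
    have hvolG : volume G = ENNReal.ofReal (m * r) := by
      rw [hG, Real.volume_Ico]
      congr 1
      field_simp
      rw [mul_assoc, hrp]; ring
    have hvolI : volume (Icc (x - r) (x + r)) = ENNReal.ofReal (2 * r) := by
      rw [Real.volume_Icc]
      congr 1
      ring
    have hdiff : volume (Icc (x - r) (x + r) \ G)
        = ENNReal.ofReal (2 * r) - ENNReal.ofReal (m * r) := by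
      rw [measure_diff hGsub measurableSet_Ico.nullMeasurableSet
          (by rw [hvolG]; exact ENNReal.ofReal_ne_top), hvolG, hvolI]
    have hle : volume (B ∩ Metric.closedBall x r)
        ≤ ENNReal.ofReal (1 - m/2) * volume (Metric.closedBall x r) := by
      calc volume (B ∩ Metric.closedBall x r)
          ≤ volume (Icc (x - r) (x + r) \ G) := measure_mono hBG
        _ = ENNReal.ofReal (2 * r) - ENNReal.ofReal (m * r) := hdiff
        _ = ENNReal.ofReal (2 * r - m * r) := by
            rw [ENNReal.ofReal_sub _ (by positivity)]
        _ = ENNReal.ofReal ((1 - m/2) * (2 * r)) := by congr 1; ring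
        _ = ENNReal.ofReal (1 - m/2) * ENNReal.ofReal (2 * r) := by
            rw [ENNReal.ofReal_mul (by linarith)]
        _ = ENNReal.ofReal (1 - m/2) * volume (Metric.closedBall x r) := by
            rw [Real.volume_closedBall]
    exact ENNReal.div_le_of_le_mul hle
  -- take the limit along r = 2⁻ⁿ
  have hseq : Tendsto (fun n : ℕ => (((2:ℝ)^n)⁻¹)) atTop (nhdsWithin 0 (Ioi 0)) := by
    apply tendsto_nhdsWithin_of_tendsto_nhds_of_eventually_within
    · have h := tendsto_pow_atTop_nhds_zero_of_lt_one (by norm_num : (0:ℝ) ≤ 1/2) (by norm_num)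
      convert h using 2 with n
      rw [div_pow, one_pow, one_div]
    · exact Eventually.of_forall fun n => mem_Ioi.2 (by positivity)
  have hcomp := hxT.comp hseq
  have hlim : (1:ENNReal) ≤ ENNReal.ofReal (1 - m/2) :=
    le_of_tendsto hcomp (Eventually.of_forall key)
  have hlt : ENNReal.ofReal (1 - m/2) < 1 := ENNReal.ofReal_lt_one.2 (by linarith)
  exact absurd hlim hlt.not_ge
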